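/- arXiv:1507.06213 — 2 statements merged into one kernel-verified Lean document; each statement's English description precedes it below -/
import Mathlib

section
/- Let K be a field and n ≥ 2. Let A be an n×n symmetric matrix over K, written in block form A = [[P, C₀],[C₀ᵀ, a₀]] with P an (n-1)×(n-1) symmetric matrix, C₀ ∈ K^{n-1} and a₀ ∈ K. Let C ∈ K^{n-1}, a ∈ K, and set N = [[0_{(n-1)×(n-1)}, C],[Cᵀ, a]]. Assume A + t·N is singular for every t ∈ K. Then: (a) if K has more than 2 elements, Cᵀ·P^ad·C = 0; (b) if K has characteristic 2, Cᵀ·P^ad·C = a·det(P); (c) if C = 0 and a ≠ 0, then det(P) = 0. -/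
open Matrix

private lemma border_det' {K : Type*} [Field K] {m : Type*} [Fintype m] [DecidableEq m]
    (P : Matrix m m K) (u v : m → K) (c : K) :
    (Matrix.fromBlocks P (Matrix.of fun i (_ : Unit) => u i)
        (Matrix.of fun (_ : Unit) j => v j) (Matrix.of fun (_ _ : Unit) => c)).det
      = c * P.det - v ⬝ᵥ P.adjugate *ᵥ u := by
  set M : Matrix (m ⊕ Unit) (m ⊕ Unit) K :=
    Matrix.fromBlocks P (Matrix.of fun i (_ : Unit) => u i)
      (Matrix.of fun (_ : Unit) j => v j) (Matrix.of fun (_ _ : Unit) => c) with hM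
  have hrow : M (Sum.inr ()) = ∑ i : m ⊕ Unit,
      M (Sum.inr ()) i • (Pi.single i (1 : K) : m ⊕ Unit → K) := by
    funext j
    simp [Pi.single_apply, Finset.sum_ite_eq']
  have h1 : M.det = ∑ i : m ⊕ Unit,
      (M.updateRow (Sum.inr ()) (M (Sum.inr ()) i • (Pi.single i (1 : K) : m ⊕ Unit → K))).det := by
    conv_lhs => rw [← M.updateRow_eq_self (Sum.inr ()), hrow]
    exact (Matrix.detRowAlternating).toMultilinearMap.map_update_sum Finset.univ (Sum.inr ())
      (fun i => M (Sum.inr ()) i • (Pi.single i (1 : K) : m ⊕ Unit → K)) M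
  have hsingle : ∀ i : m ⊕ Unit,
      (M.updateRow (Sum.inr ()) (M (Sum.inr ()) i • (Pi.single i (1 : K) : m ⊕ Unit → K))).det
        = M (Sum.inr ()) i * (M.updateRow (Sum.inr ()) (Pi.single i (1 : K) : m ⊕ Unit → K)).det := by
    intro i; rw [Matrix.det_updateRow_smul]
  have hcorner : (M.updateRow (Sum.inr ()) (Pi.single (Sum.inr ()) (1 : K))).det = P.det := by
    have h : M.updateRow (Sum.inr ()) (Pi.single (Sum.inr ()) (1 : K))
        = Matrix.fromBlocks P (Matrix.of fun i (_ : Unit) => u i) 0 1 := by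
      ext i j
      rcases i with i | i <;> rcases j with j | j <;>
        simp [Matrix.updateRow_apply, Pi.single_apply, hM, Matrix.one_apply]
    rw [h, Matrix.det_fromBlocks_zero₂₁]
    simp
  have hside : ∀ j : m, (M.updateRow (Sum.inr ()) (Pi.single (Sum.inl j) (1 : K))).det
      = -(P.updateCol j u).det := by
    intro j
    set N := M.updateRow (Sum.inr ()) (Pi.single (Sum.inl j) (1 : K)) with hN
    have hswap : N.submatrix id (Equiv.swap (Sum.inl j) (Sum.inr ()))
        = Matrix.fromBlocks (P.updateCol j u) (Matrix.of fun i (_ : Unit) => P i j) 0 1 := by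
      ext i k
      rcases i with i | i <;> rcases k with k | k
      · by_cases hk : k = j <;>
          simp [hk, Equiv.swap_apply_def, hN, hM, Matrix.updateRow_apply,
            Matrix.updateCol_apply]
      · simp [Equiv.swap_apply_def, hN, hM, Matrix.updateRow_apply]
      · by_cases hk : k = j <;>
          simp [hk, Equiv.swap_apply_def, hN, Matrix.updateRow_apply, Pi.single_apply,
            Matrix.one_apply]
      · simp [Equiv.swap_apply_def, hN, Matrix.updateRow_apply, Pi.single_apply,
          Matrix.one_apply]
    have hperm := Matrix.det_permute' (Equiv.swap (Sum.inl j) (Sum.inr ())) N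
    rw [hswap, Matrix.det_fromBlocks_zero₂₁] at hperm
    have hsign : Equiv.Perm.sign (Equiv.swap (Sum.inl (j:m)) (Sum.inr () : m ⊕ Unit)) = -1 :=
      Equiv.Perm.sign_swap (by simp)
    rw [hsign] at hperm
    simp only [Matrix.det_unique, Matrix.one_apply_eq, mul_one] at hperm
    push_cast at hperm
    linear_combination hperm
  rw [h1]
  simp only [hsingle]
  rw [Fintype.sum_sum_type]
  simp only [hside, hcorner]
  have hv : ∀ j : m, M (Sum.inr ()) (Sum.inl j) = v j := fun j => rfl
  have hc : M (Sum.inr ()) (Sum.inr ()) = c := rfl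
  simp only [hv, hc, Finset.univ_unique, Finset.sum_singleton]
  rw [← Matrix.cramer_eq_adjugate_mulVec]
  simp only [dotProduct, Matrix.cramer_apply]
  simp only [mul_neg]
  rw [Finset.sum_neg_distrib]
  ring

/-- If `A` is an `n × n` symmetric matrix with blocks `[[P, C₀],[C₀ᵀ, a₀]]` and
`N = [[0, C],[Cᵀ, a]]`, and `A + t • N` is singular for all `t`, then:
(a) if `K` has more than two elements, `Cᵀ · adjugate P · C = 0`;
(b) if `K` has characteristic 2, `Cᵀ · adjugate P · C = a * det P`;
(c) if `C = 0` and `a ≠ 0`, then `det P = 0`. -/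
theorem stmt2 {K : Type*} [Field K] (n : ℕ) (hn : 2 ≤ n)
    (P : Matrix (Fin (n - 1)) (Fin (n - 1)) K) (hP : P.IsSymm)
    (C₀ C : Fin (n - 1) → K) (a₀ a : K)
    (hsing : ∀ t : K,
      (Matrix.fromBlocks P (Matrix.of fun i (_ : Unit) => C₀ i)
          (Matrix.of fun (_ : Unit) j => C₀ j) (Matrix.of fun (_ _ : Unit) => a₀)
        + t • Matrix.fromBlocks (0 : Matrix (Fin (n - 1)) (Fin (n - 1)) K)
          (Matrix.of fun i (_ : Unit) => C i)
          (Matrix.of fun (_ : Unit) j => C j) (Matrix.of fun (_ _ : Unit) => a)).det = 0) :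
    ((∃ x y z : K, x ≠ y ∧ x ≠ z ∧ y ≠ z) → C ⬝ᵥ P.adjugate *ᵥ C = 0) ∧
    (ringChar K = 2 → C ⬝ᵥ P.adjugate *ᵥ C = a * P.det) ∧
    (C = 0 → a ≠ 0 → P.det = 0) := by
  have hadj : (P.adjugate)ᵀ = P.adjugate := by
    rw [Matrix.adjugate_transpose, hP.eq]
  have hsymm : ∀ x y : Fin (n - 1) → K,
      x ⬝ᵥ P.adjugate *ᵥ y = y ⬝ᵥ P.adjugate *ᵥ x := by
    intro x y
    rw [Matrix.dotProduct_mulVec, ← Matrix.mulVec_transpose, hadj, dotProduct_comm]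
  have key : ∀ t : K,
      (a₀ * P.det - C₀ ⬝ᵥ P.adjugate *ᵥ C₀)
        + (a * P.det - 2 * (C₀ ⬝ᵥ P.adjugate *ᵥ C)) * t
        + (-(C ⬝ᵥ P.adjugate *ᵥ C)) * (t * t) = 0 := by
    intro t
    have h := hsing t
    have hmat : (Matrix.fromBlocks P (Matrix.of fun i (_ : Unit) => C₀ i)
          (Matrix.of fun (_ : Unit) j => C₀ j) (Matrix.of fun (_ _ : Unit) => a₀)
        + t • Matrix.fromBlocks (0 : Matrix (Fin (n - 1)) (Fin (n - 1)) K)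
          (Matrix.of fun i (_ : Unit) => C i)
          (Matrix.of fun (_ : Unit) j => C j) (Matrix.of fun (_ _ : Unit) => a))
        = Matrix.fromBlocks P (Matrix.of fun i (_ : Unit) => (C₀ + t • C) i)
          (Matrix.of fun (_ : Unit) j => (C₀ + t • C) j)
          (Matrix.of fun (_ _ : Unit) => a₀ + t * a) := by
      ext i j
      rcases i with i | i <;> rcases j with j | j <;>
        simp [Matrix.add_apply, Matrix.smul_apply, smul_eq_mul]
    rw [hmat, border_det'] at h
    simp only [Matrix.mulVec_add, Matrix.mulVec_smul, dotProduct_add,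
      add_dotProduct, dotProduct_smul, smul_dotProduct,
      smul_eq_mul] at h
    linear_combination h + t * hsymm C C₀
  refine ⟨?_, ?_, ?_⟩
  · rintro ⟨x, y, z, hxy, hxz, hyz⟩
    have step : ∀ w : K, x ≠ w →
        (a * P.det - 2 * (C₀ ⬝ᵥ P.adjugate *ᵥ C)) + (-(C ⬝ᵥ P.adjugate *ᵥ C)) * (x + w) = 0 := by
      intro w hxw
      have hne : x - w ≠ 0 := sub_ne_zero.mpr hxw
      have h : (x - w) * ((a * P.det - 2 * (C₀ ⬝ᵥ P.adjugate *ᵥ C))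
          + (-(C ⬝ᵥ P.adjugate *ᵥ C)) * (x + w)) = 0 := by
        linear_combination key x - key w
      exact (mul_eq_zero.mp h).resolve_left hne
    have h1 := step y hxy
    have h2 := step z hxz
    have h3 : (y - z) * (-(C ⬝ᵥ P.adjugate *ᵥ C)) = 0 := by linear_combination h1 - h2
    have h4 := (mul_eq_zero.mp h3).resolve_left (sub_ne_zero.mpr hyz)
    linear_combination -h4
  · intro hchar
    have h2 : (2 : K) = 0 := by
      have := ringChar.Nat.cast_ringChar (R := K)
      rw [hchar] at this
      exact_mod_cast this
    linear_combination key 0 - key 1 - (C₀ ⬝ᵥ P.adjugate *ᵥ C) * h2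
  · intro hC ha
    have hq0 : C ⬝ᵥ P.adjugate *ᵥ C = 0 := by rw [hC]; simp
    have hq1 : C₀ ⬝ᵥ P.adjugate *ᵥ C = 0 := by rw [hC]; simp
    have hdet : a * P.det = 0 := by linear_combination key 1 - key 0 + 2 * hq1 + hq0
    exact (mul_eq_zero.mp hdet).resolve_left ha
end

section
/- Let K be a field of characteristic 2 and n ≥ 2 an integer. Let 𝒮 be a non-empty affine subspace of the space of n×n symmetric matrices over K in which every matrix is singular, and let S denote its translation vector space. Then either n is odd and 𝒮 equals the full space of n×n alternating matrices over K, or there exists a linear hyperplane H of Kⁿ such that S_H does not contain (Alt_n(K))_H, where Alt_n(K) denotes the space of n×n alternating matrices. -/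
open Matrix

/-- For a linear subspace `D` of `n × n` matrices and a subspace `H` of `Kⁿ`,
the subspace `D_H` of all matrices `N ∈ D` such that `Xᵀ N Y = 0` for all `X, Y ∈ H`. -/
def matHyp {K : Type*} [Field K] {n : ℕ} (D : Submodule K (Matrix (Fin n) (Fin n) K))
    (H : Submodule K (Fin n → K)) : Submodule K (Matrix (Fin n) (Fin n) K) where
  carrier := {N | N ∈ D ∧ ∀ X ∈ H, ∀ Y ∈ H, X ⬝ᵥ N *ᵥ Y = 0}
  add_mem' := by
    rintro a b ⟨haD, ha⟩ ⟨hbD, hb⟩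
    refine ⟨D.add_mem haD hbD, fun X hX Y hY => ?_⟩
    rw [Matrix.add_mulVec, dotProduct_add, ha X hX Y hY, hb X hX Y hY, add_zero]
  zero_mem' := by
    refine ⟨D.zero_mem, fun X hX Y hY => ?_⟩
    rw [Matrix.zero_mulVec, dotProduct_zero]
  smul_mem' := by
    rintro c a ⟨haD, ha⟩
    refine ⟨D.smul_mem c haD, fun X hX Y hY => ?_⟩
    rw [Matrix.smul_mulVec, dotProduct_smul, ha X hX Y hY, smul_zero]



section Aux
variable {K : Type*} [Field K]

/-- There is a symmetric invertible matrix with prescribed diagonal `d`. -/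
def GoodDiag (n : ℕ) (d : Fin n → K) : Prop :=
  ∃ M : Matrix (Fin n) (Fin n) K, M.IsSymm ∧ (∀ i, M i i = d i) ∧ M.det ≠ 0

lemma goodDiag_zero (d : Fin 0 → K) : GoodDiag 0 d :=
  ⟨0, by simp [Matrix.IsSymm], fun i => i.elim0, by simp [Matrix.det_fin_zero]⟩

lemma goodDiag_one (d : Fin 1 → K) (h : d 0 ≠ 0) : GoodDiag 1 d :=
  ⟨Matrix.diagonal d, Matrix.isSymm_diagonal d, fun i => Matrix.diagonal_apply_eq d i, by
    rw [Matrix.det_diagonal, Fin.prod_univ_one]; exact h⟩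

lemma goodDiag_two (d : Fin 2 → K) : GoodDiag 2 d := by
  classical
  rcases eq_or_ne (d 0 * d 1) 0 with h | h
  · refine ⟨!![d 0, 1; 1, d 1], ?_, ?_, ?_⟩
    · show _ = _
      ext i j
      fin_cases i <;> fin_cases j <;> simp
    · intro i; fin_cases i <;> simp
    · rw [Matrix.det_fin_two]
      simp [h]
  · refine ⟨Matrix.diagonal d, Matrix.isSymm_diagonal d, fun i => Matrix.diagonal_apply_eq d i, ?_⟩
    rw [Matrix.det_diagonal, Fin.prod_univ_two]
    exact h

lemma goodDiag_append (a b : ℕ) (d : Fin (a + b) → K)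
    (hA : GoodDiag a (fun i => d (Fin.castAdd b i)))
    (hB : GoodDiag b (fun j => d (Fin.natAdd a j))) : GoodDiag (a + b) d := by
  obtain ⟨A, hAs, hAd, hAdet⟩ := hA
  obtain ⟨B, hBs, hBd, hBdet⟩ := hB
  refine ⟨(Matrix.fromBlocks A 0 0 B).submatrix finSumFinEquiv.symm finSumFinEquiv.symm,
    ?_, ?_, ?_⟩
  · show _ = _
    rw [Matrix.transpose_submatrix, Matrix.fromBlocks_transpose, Matrix.transpose_zero,
      Matrix.transpose_zero, hAs, hBs]
  · intro i
    rcases h : finSumFinEquiv.symm i with k | k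
    · have hi : i = Fin.castAdd b k := by
        rw [(Equiv.symm_apply_eq _).mp h, finSumFinEquiv_apply_left]
      rw [Matrix.submatrix_apply, h, Matrix.fromBlocks_apply₁₁, hAd, hi]
    · have hi : i = Fin.natAdd a k := by
        rw [(Equiv.symm_apply_eq _).mp h, finSumFinEquiv_apply_right]
      rw [Matrix.submatrix_apply, h, Matrix.fromBlocks_apply₂₂, hBd, hi]
  · rw [Matrix.det_submatrix_equiv_self, Matrix.det_fromBlocks_zero₂₁]
    exact mul_ne_zero hAdet hBdet

lemma goodDiag_even : ∀ (k : ℕ) (d : Fin (2 * k) → K), GoodDiag (2 * k) d := by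
  intro k
  induction k with
  | zero => intro d; exact goodDiag_zero d
  | succ k ih =>
      have h : 2 * (k + 1) = 2 * k + 2 := by ring
      rw [h]
      intro d
      exact goodDiag_append (2 * k) 2 d (ih _) (goodDiag_two _)

lemma goodDiag_perm {n : ℕ} (d : Fin n → K) (σ : Equiv.Perm (Fin n))
    (h : GoodDiag n (d ∘ σ)) : GoodDiag n d := by
  obtain ⟨M, hs, hd, hdet⟩ := h
  refine ⟨M.submatrix σ.symm σ.symm, ?_, ?_, ?_⟩
  · show _ = _
    rw [Matrix.transpose_submatrix, hs]
  · intro i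
    rw [Matrix.submatrix_apply, hd]
    simp
  · rw [Matrix.det_submatrix_equiv_self]; exact hdet

lemma goodDiag_cast {m n : ℕ} (h : m = n) (d : Fin n → K)
    (hg : GoodDiag m (fun i => d (Fin.cast h i))) : GoodDiag n d := by
  subst h
  exact hg

lemma goodDiag_of {n : ℕ} (d : Fin n → K) (h : Even n ∨ ∃ i, d i ≠ 0) : GoodDiag n d := by
  rcases Nat.even_or_odd n with he | ho
  · obtain ⟨k, hk⟩ := he
    exact goodDiag_cast (show 2 * k = n by omega) d (goodDiag_even k _)
  · obtain ⟨k, hk⟩ := ho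
    have hi : ∃ i, d i ≠ 0 := by
      rcases h with he | hi
      · exact absurd he (by simp [hk, Nat.even_iff, Nat.odd_iff.mp ⟨k, hk⟩])
      · exact hi
    obtain ⟨i, hi⟩ := hi
    apply goodDiag_cast (show 2 * k + 1 = n by omega) d
    set d' : Fin (2 * k + 1) → K := fun j => d (Fin.cast (show 2 * k + 1 = n by omega) j) with hd'
    have hw : ∃ i', d' i' ≠ 0 := ⟨Fin.cast (show n = 2 * k + 1 by omega) i, by
      simpa [hd'] using hi⟩
    obtain ⟨i', hi'⟩ := hw
    apply goodDiag_perm d' (Equiv.swap (Fin.last (2 * k)) i')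
    apply goodDiag_append (2 * k) 1
    · exact goodDiag_even k _
    · apply goodDiag_one
      show (d' ∘ _) (Fin.natAdd (2 * k) 0) ≠ 0
      have hlast : Fin.natAdd (2 * k) (0 : Fin 1) = Fin.last (2 * k) := by
        ext; simp
      simp only [Function.comp_apply, hlast, Equiv.swap_apply_left]
      exact hi'

end Aux

section CharAux
variable {K : Type*} [Field K]

lemma alt_of_symm_diag {n : ℕ} (h2 : ∀ x : K, x + x = 0) {M : Matrix (Fin n) (Fin n) K}
    (hs : M.IsSymm) (hd : ∀ i, M i i = 0) : ∀ X : Fin n → K, X ⬝ᵥ M *ᵥ X = 0 := by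
  intro X
  have e1 : X ⬝ᵥ M *ᵥ X = ∑ p : Fin n × Fin n, X p.1 * (M p.1 p.2 * X p.2) := by
    simp only [dotProduct, Matrix.mulVec, Finset.mul_sum]
    rw [← Finset.univ_product_univ, Finset.sum_product]
  rw [e1]
  apply Finset.sum_ninvolution (fun p => (p.2, p.1))
  · rintro ⟨a, b⟩
    have hsym : M b a = M a b := hs.apply a b
    show X a * (M a b * X b) + X b * (M b a * X a) = 0
    rw [hsym, show X b * (M a b * X a) = X a * (M a b * X b) by ring]
    exact h2 _
  · rintro ⟨a, b⟩ hne heq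
    apply hne
    have hab : b = a := congrArg Prod.fst heq
    subst hab
    show X b * (M b b * X b) = 0
    rw [hd b]; ring
  · intro a; exact Finset.mem_univ _
  · rintro ⟨a, b⟩; rfl

lemma vecMulVec_mulVec' {n : ℕ} (u v w : Fin n → K) :
    Matrix.vecMulVec u v *ᵥ w = (v ⬝ᵥ w) • u := by
  ext a
  simp only [Matrix.mulVec, dotProduct, Matrix.vecMulVec_apply, Pi.smul_apply, smul_eq_mul,
    Finset.sum_mul]
  exact Finset.sum_congr rfl fun j _ => by ring

lemma piece_props {n : ℕ} (h2 : ∀ x : K, x + x = 0) (l : Fin n → K) (j : Fin n) :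
    (∀ X : Fin n → K, X ⬝ᵥ (Matrix.vecMulVec l (Pi.single j 1) +
        Matrix.vecMulVec (Pi.single j 1) l) *ᵥ X = 0) ∧
    (∀ X : Fin n → K, X j = 0 → ∀ Y : Fin n → K, Y j = 0 →
      X ⬝ᵥ (Matrix.vecMulVec l (Pi.single j 1) + Matrix.vecMulVec (Pi.single j 1) l) *ᵥ Y = 0) := by
  have hgen : ∀ X Y : Fin n → K, X ⬝ᵥ (Matrix.vecMulVec l (Pi.single j 1) +
      Matrix.vecMulVec (Pi.single j 1) l) *ᵥ Y = Y j * (X ⬝ᵥ l) + (l ⬝ᵥ Y) * X j := by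
    intro X Y
    rw [Matrix.add_mulVec, vecMulVec_mulVec', vecMulVec_mulVec', dotProduct_add,
      dotProduct_smul, dotProduct_smul, single_dotProduct, dotProduct_single]
    simp only [smul_eq_mul]
    ring
  constructor
  · intro X
    rw [hgen, dotProduct_comm]
    have h := h2 (l ⬝ᵥ X)
    linear_combination X j * h
  · intro X hX Y hY
    rw [hgen, hX, hY]
    ring

end CharAux

/-- Over a field of characteristic 2: if `𝒮` is a nonempty affine subspace of singular
symmetric `n × n` matrices (`n ≥ 2`), with direction `S`, then either `n` is odd and `𝒮`
is the full space of alternating matrices, or there is a linear hyperplane `H` of `Kⁿ`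
such that `S_H` does not contain `(Alt_n(K))_H`. -/
theorem stmt11 {K : Type*} [Field K] (hchar : ringChar K = 2) (n : ℕ) (hn : 2 ≤ n)
    (𝒮 : AffineSubspace K (Matrix (Fin n) (Fin n) K))
    (hne : (𝒮 : Set (Matrix (Fin n) (Fin n) K)).Nonempty)
    (hsymm : ∀ M ∈ 𝒮, M.IsSymm)
    (hsing : ∀ M ∈ 𝒮, M.det = 0) :
    (Odd n ∧ (𝒮 : Set (Matrix (Fin n) (Fin n) K)) =
        {M | ∀ X : Fin n → K, X ⬝ᵥ M *ᵥ X = 0}) ∨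
    (∃ H : Submodule K (Fin n → K), IsCoatom H ∧
      ¬ ({N : Matrix (Fin n) (Fin n) K | (∀ X : Fin n → K, X ⬝ᵥ N *ᵥ X = 0) ∧
            ∀ X ∈ H, ∀ Y ∈ H, X ⬝ᵥ N *ᵥ Y = 0} ⊆
          (matHyp 𝒮.direction H : Set (Matrix (Fin n) (Fin n) K)))) := by
  classical
  have h2 : ∀ x : K, x + x = 0 := by
    haveI : CharP K 2 := hchar ▸ ringChar.charP K
    intro x
    rw [← two_mul, show (2 : K) = 0 from CharP.cast_eq_zero K 2, zero_mul]
  have h2M : ∀ A : Matrix (Fin n) (Fin n) K, A + A = 0 := by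
    intro A; ext i j
    simp only [Matrix.add_apply, Matrix.zero_apply]
    exact h2 _
  by_cases hH : ∀ H : Submodule K (Fin n → K), IsCoatom H →
      ({N : Matrix (Fin n) (Fin n) K | (∀ X : Fin n → K, X ⬝ᵥ N *ᵥ X = 0) ∧
          ∀ X ∈ H, ∀ Y ∈ H, X ⬝ᵥ N *ᵥ Y = 0} ⊆
        (matHyp 𝒮.direction H : Set (Matrix (Fin n) (Fin n) K)))
  swap
  · right
    push_neg at hH
    obtain ⟨H, h1, hneg⟩ := hH
    exact ⟨H, h1, hneg⟩
  left
  obtain ⟨A, hA⟩ := hne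
  have hA' : A ∈ 𝒮 := hA
  have hmemS : ∀ B, B ∈ 𝒮 ↔ ∃ s ∈ 𝒮.direction, B = A + s := by
    intro B
    constructor
    · intro hB
      refine ⟨B -ᵥ A, AffineSubspace.vsub_mem_direction hB hA', ?_⟩
      rw [vsub_eq_sub]; abel
    · rintro ⟨s, hs, rfl⟩
      have h := AffineSubspace.vadd_mem_of_mem_direction hs hA'
      rw [vadd_eq_add, add_comm] at h
      exact h
  have hAlt_add : ∀ P Q : Matrix (Fin n) (Fin n) K,
      (∀ X : Fin n → K, X ⬝ᵥ P *ᵥ X = 0) → (∀ X : Fin n → K, X ⬝ᵥ Q *ᵥ X = 0) →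
      ∀ X : Fin n → K, X ⬝ᵥ (P + Q) *ᵥ X = 0 := by
    intro P Q hP hQ X
    rw [Matrix.add_mulVec, dotProduct_add, hP X, hQ X, add_zero]
  have alt_diag : ∀ M : Matrix (Fin n) (Fin n) K,
      (∀ X : Fin n → K, X ⬝ᵥ M *ᵥ X = 0) → ∀ i, M i i = 0 := by
    intro M hM i
    have h := hM (Pi.single i 1)
    simpa [Matrix.mulVec_single, single_dotProduct] using h
  have heq_of_add : ∀ a b : K, a + b = 0 → a = b := by
    intro a b hab
    have hb := h2 b
    linear_combination hab - hb
  have alt_symm : ∀ M : Matrix (Fin n) (Fin n) K,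
      (∀ X : Fin n → K, X ⬝ᵥ M *ᵥ X = 0) → M.IsSymm := by
    intro M hM
    show Mᵀ = M
    ext i j
    show M j i = M i j
    rcases eq_or_ne i j with rfl | hij
    · rfl
    · have hexp := hM (Pi.single i 1 + Pi.single j 1)
      rw [Matrix.mulVec_add, dotProduct_add, add_dotProduct, add_dotProduct] at hexp
      simp only [Matrix.mulVec_single, MulOpposite.op_one, one_smul, Matrix.col_apply, single_dotProduct, mul_one, one_mul] at hexp
      have hii := alt_diag M hM i
      have hjj := alt_diag M hM j
      exact heq_of_add _ _ (by linear_combination hexp - hii - hjj)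
  -- every alternating matrix belongs to the direction
  have altS : ∀ M : Matrix (Fin n) (Fin n) K,
      (∀ X : Fin n → K, X ⬝ᵥ M *ᵥ X = 0) → M ∈ 𝒮.direction := by
    intro M hM
    have hd := alt_diag M hM
    have hsymM := alt_symm M hM
    set L : Matrix (Fin n) (Fin n) K := Matrix.of (fun a b => if b < a then M a b else 0) with hL
    set Npiece : Fin n → Matrix (Fin n) (Fin n) K := fun j =>
      Matrix.vecMulVec (fun a => L a j) (Pi.single j 1) +
        Matrix.vecMulVec (Pi.single j 1) (fun a => L a j) with hNp
    have hMsum : M = ∑ j, Npiece j := by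
      ext a b
      rw [Matrix.sum_apply]
      simp only [hNp, Matrix.add_apply, Matrix.vecMulVec_apply, Pi.single_apply]
      rw [Finset.sum_add_distrib]
      have e1 : ∑ j, L a j * (if b = j then (1 : K) else 0) = L a b := by
        rw [Finset.sum_congr rfl (fun j _ => by rw [mul_ite, mul_one, mul_zero]),
          Finset.sum_ite_eq]
        simp
      have e2 : ∑ j, (if a = j then (1 : K) else 0) * L b j = L b a := by
        rw [Finset.sum_congr rfl (fun j _ => by rw [ite_mul, one_mul, zero_mul]),
          Finset.sum_ite_eq]
        simp
      rw [e1, e2, hL]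
      simp only [Matrix.of_apply]
      rcases lt_trichotomy a b with hab | hab | hab
      · rw [if_neg (asymm hab), if_pos hab, zero_add]
        exact (hsymM.apply a b).symm
      · subst hab
        rw [if_neg (lt_irrefl a), zero_add, hd a]
      · rw [if_pos hab, if_neg (asymm hab), add_zero]
    have hpiece : ∀ j, Npiece j ∈ 𝒮.direction := by
      intro j
      have hsurj : Function.Surjective (LinearMap.proj j : (Fin n → K) →ₗ[K] K) :=
        fun c => ⟨fun _ => c, rfl⟩
      have hco : IsCoatom (LinearMap.ker (LinearMap.proj j : (Fin n → K) →ₗ[K] K)) :=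
        LinearMap.isCoatom_ker_of_surjective hsurj
      have hprops := piece_props h2 (fun a => L a j) j
      have hmem := hH _ hco (show Npiece j ∈ _ from ⟨hprops.1, ?_⟩)
      · exact hmem.1
      · intro X hX Y hY
        exact hprops.2 X (LinearMap.mem_ker.mp hX) Y (LinearMap.mem_ker.mp hY)
    rw [hMsum]
    exact Submodule.sum_mem _ fun j _ => hpiece j
  have key : ∀ d : Fin n → K, (Even n ∨ ∃ i, d i ≠ 0) →
      ∃ N : Matrix (Fin n) (Fin n) K, (∀ X : Fin n → K, X ⬝ᵥ N *ᵥ X = 0) ∧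
        (Matrix.diagonal d + N).det ≠ 0 := by
    intro d hcase
    obtain ⟨M, hMs, hMd, hMdet⟩ := goodDiag_of d hcase
    refine ⟨M + Matrix.diagonal d, ?_, ?_⟩
    · apply alt_of_symm_diag h2 (hMs.add (Matrix.isSymm_diagonal d))
      intro i
      rw [Matrix.add_apply, Matrix.diagonal_apply_eq, hMd]
      exact h2 _
    · have heq : Matrix.diagonal d + (M + Matrix.diagonal d) = M := by
        rw [add_comm M (Matrix.diagonal d), ← add_assoc, h2M (Matrix.diagonal d), zero_add]
      rw [heq]
      exact hMdet
  have decomp : ∀ B : Matrix (Fin n) (Fin n) K, B.IsSymm →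
      ∀ X : Fin n → K, X ⬝ᵥ (B + Matrix.diagonal (fun i => B i i)) *ᵥ X = 0 := by
    intro B hB
    apply alt_of_symm_diag h2 (hB.add (Matrix.isSymm_diagonal _))
    intro i
    rw [Matrix.add_apply, Matrix.diagonal_apply_eq]
    exact h2 _
  have hAsymm := hsymm A hA'
  have hmain : ¬ (Even n ∨ ∃ i, A i i ≠ 0) := by
    intro hcase
    obtain ⟨N, hNalt, hNdet⟩ := key (fun i => A i i) hcase
    have hGmem : Matrix.diagonal (fun i => A i i) + N ∈ 𝒮 := by
      refine (hmemS _).mpr ⟨(A + Matrix.diagonal (fun i => A i i)) + N,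
        altS _ (hAlt_add _ _ (decomp A hAsymm) hNalt), ?_⟩
      have heq : A + ((A + Matrix.diagonal (fun i => A i i)) + N) =
          Matrix.diagonal (fun i => A i i) + N := by
        rw [show A + ((A + Matrix.diagonal (fun i => A i i)) + N) =
          (A + A) + (Matrix.diagonal (fun i => A i i) + N) from by abel, h2M, zero_add]
      exact heq.symm
    exact hNdet (hsing _ hGmem)
  push_neg at hmain
  obtain ⟨hnotEven, hdiagA⟩ := hmain
  have hodd : Odd n := Nat.not_even_iff_odd.mp hnotEven
  have hAalt : ∀ X : Fin n → K, X ⬝ᵥ A *ᵥ X = 0 := by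
    apply alt_of_symm_diag h2 hAsymm
    intro i
    exact hdiagA i
  have SAlt : ∀ M ∈ 𝒮.direction, ∀ X : Fin n → K, X ⬝ᵥ M *ᵥ X = 0 := by
    intro M hMS
    have hAM : A + M ∈ 𝒮 := (hmemS _).mpr ⟨M, hMS, rfl⟩
    have hMsymm : M.IsSymm := by
      have h1 := hsymm _ hAM
      have hMe : M = (A + M) + A := by
        rw [show (A + M) + A = M + (A + A) from by abel, h2M, add_zero]
      rw [hMe]
      exact h1.add hAsymm
    have hdM : ∀ i, M i i = 0 := by
      by_contra hc
      push_neg at hc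
      obtain ⟨N, hNalt, hNdet⟩ := key (fun i => M i i) (Or.inr hc)
      have hGmem : Matrix.diagonal (fun i => M i i) + N ∈ 𝒮 := by
        refine (hmemS _).mpr ⟨M + (((M + Matrix.diagonal (fun i => M i i)) + N) + A),
          Submodule.add_mem _ hMS
            (altS _ (hAlt_add _ _ (hAlt_add _ _ (decomp M hMsymm) hNalt) hAalt)), ?_⟩
        have heq : A + (M + (((M + Matrix.diagonal (fun i => M i i)) + N) + A)) =
            Matrix.diagonal (fun i => M i i) + N := by
          rw [show A + (M + (((M + Matrix.diagonal (fun i => M i i)) + N) + A)) =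
            (A + A) + ((M + M) + (Matrix.diagonal (fun i => M i i) + N)) from by abel,
            h2M, h2M, zero_add, zero_add]
        exact heq.symm
      exact hNdet (hsing _ hGmem)
    exact alt_of_symm_diag h2 hMsymm hdM
  refine ⟨hodd, Set.ext fun B => ?_⟩
  simp only [Set.mem_setOf_eq, AffineSubspace.mem_coe]
  constructor
  · intro hB
    obtain ⟨s, hs, rfl⟩ := (hmemS _).mp hB
    exact hAlt_add _ _ hAalt (SAlt s hs)
  · intro hB
    refine (hmemS _).mpr ⟨B + A, altS _ (hAlt_add _ _ hB hAalt), ?_⟩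
    rw [show A + (B + A) = B + (A + A) from by abel, h2M, add_zero]
end
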